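/- If v : ℝ → ℂ is smooth with all derivatives bounded on ℝ, and for every smooth compactly supported function φ : ℝ → ℂ the convolution v * φ is almost periodic (Bochner), then v belongs to 𝓑_ap, i.e. every derivative of v is almost periodic (Bochner). -/

import Mathlib

open Filter MeasureTheory Topology

noncomputable section

/-- A function `f : ℝ → ℂ` is almost periodic in the sense of Bochner: it is continuous
and from every sequence of real translates one can extract a subsequence along which
the translates converge uniformly on `ℝ`. -/
def AlmostPeriodic (f : ℝ → ℂ) : Prop :=
  Continuous f ∧ ∀ h : ℕ → ℝ, ∃ φ : ℕ → ℕ, StrictMono φ ∧ ∃ g : ℝ → ℂ,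
    TendstoUniformly (fun k x => f (x + h (φ k))) g atTop

/-- `f ∈ 𝓑_ap` : `f` is smooth and every derivative of `f` is almost periodic. -/
def BAp (f : ℝ → ℂ) : Prop :=
  ContDiff ℝ (⊤ : ℕ∞) f ∧ ∀ j : ℕ, AlmostPeriodic (iteratedDeriv j f)

/-- The seminorm `|f|_{k,∞} = Σ_{j ≤ k} sup_{x ∈ ℝ} ‖f^{(j)}(x)‖`. -/
def apSeminorm (k : ℕ) (f : ℝ → ℂ) : ℝ :=
  ∑ j ∈ Finset.range (k + 1), ⨆ x : ℝ, ‖iteratedDeriv j f x‖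

/-- A net `(u_ε)_{ε ∈ (0,1]}` is moderate. -/
def Moderate (u : ℝ → ℝ → ℂ) : Prop :=
  ∀ k : ℕ, ∃ m : ℕ, ∃ C > 0, ∃ ε₀ ∈ Set.Ioc (0:ℝ) 1,
    ∀ ε ∈ Set.Ioc (0:ℝ) 1, ε ≤ ε₀ → apSeminorm k (u ε) ≤ C / ε ^ m

/-- A net `(u_ε)_{ε ∈ (0,1]}` is negligible. -/
def Negligible (u : ℝ → ℝ → ℂ) : Prop :=
  ∀ k m : ℕ, ∃ C > 0, ∃ ε₀ ∈ Set.Ioc (0:ℝ) 1,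
    ∀ ε ∈ Set.Ioc (0:ℝ) 1, ε ≤ ε₀ → apSeminorm k (u ε) ≤ C * ε ^ m

lemma ap_closure (F : ℕ → ℝ → ℂ) (f : ℝ → ℂ) (hF : ∀ n, AlmostPeriodic (F n))
    (hu : TendstoUniformly F f atTop) : AlmostPeriodic f := by
  constructor
  · exact hu.continuous (Frequently.of_forall fun n => (hF n).1)
  intro h
  have key : ∀ p : ℕ × (ℕ → ℕ), ∃ ψ : ℕ → ℕ, StrictMono ψ ∧ ∃ g : ℝ → ℂ,
      TendstoUniformly (fun k x => F p.1 (x + (h ∘ p.2) (ψ k))) g atTop :=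
    fun p => (hF p.1).2 (h ∘ p.2)
  choose ψ hψ g hg using key
  set s : ℕ → ℕ → ℕ := fun n => Nat.rec (ψ (0, id)) (fun n sn => sn ∘ ψ (n+1, sn)) n with hs
  have hssucc : ∀ n, s (n+1) = s n ∘ ψ (n+1, s n) := fun n => rfl
  have hsmono : ∀ n, StrictMono (s n) := by
    intro n; induction n with
    | zero => exact hψ (0, id)
    | succ n ih => exact ih.comp (hψ (n+1, s n))
  have hconvn : ∀ n, ∃ gn : ℝ → ℂ,
      TendstoUniformly (fun k x => F n (x + h (s n k))) gn atTop := by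
    intro n
    cases n with
    | zero => exact ⟨g (0, id), hg (0, id)⟩
    | succ n => exact ⟨g (n+1, s n), hg (n+1, s n)⟩
  have htail : ∀ n j, ∃ t : ℕ → ℕ, (∀ k, k ≤ t k) ∧ s (n + j) = s n ∘ t := by
    intro n j
    induction j with
    | zero => exact ⟨id, fun k => le_rfl, rfl⟩
    | succ j ih =>
      obtain ⟨t, ht, hteq⟩ := ih
      refine ⟨t ∘ ψ (n+j+1, s (n+j)), fun k => le_trans ((hψ _).le_apply) (ht _), ?_⟩
      have : s (n + (j+1)) = s (n+j) ∘ ψ (n+j+1, s (n+j)) := hssucc (n+j)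
      rw [this, hteq]; rfl
  set d : ℕ → ℕ := fun k => s k k with hd
  have hdmono : StrictMono d := by
    apply strictMono_nat_of_lt_succ
    intro k
    calc s k k < s k (k+1) := hsmono k (lt_add_one k)
    _ ≤ s k (ψ (k+1, s k) (k+1)) := (hsmono k).monotone (hψ _).le_apply
    _ = s (k+1) (k+1) := rfl
  refine ⟨d, hdmono, ?_⟩
  have hrep : ∀ k n, n ≤ k → ∃ m, k ≤ m ∧ d k = s n m := by
    intro k n hn
    obtain ⟨j, rfl⟩ := Nat.exists_eq_add_of_le hn
    obtain ⟨t, ht, hteq⟩ := htail n j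
    exact ⟨t (n+j), ht _, congrFun hteq (n+j)⟩
  set G : ℕ → ℝ → ℂ := fun k x => f (x + h (d k)) with hG
  have hcauchy : UniformCauchySeqOn G atTop Set.univ := by
    rw [Metric.uniformCauchySeqOn_iff]
    intro ε hε
    obtain ⟨n, hn⟩ : ∃ n, ∀ x, dist (f x) (F n x) < ε/3 := by
      have := (Metric.tendstoUniformly_iff.mp hu (ε/3) (by linarith)).exists
      exact this
    obtain ⟨gn, hgn⟩ := hconvn n
    obtain ⟨N, hN⟩ : ∃ N, ∀ m ≥ N, ∀ x : ℝ, dist (gn x) (F n (x + h (s n m))) < ε/6 := by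
      have := Metric.tendstoUniformly_iff.mp hgn (ε/6) (by linarith)
      exact eventually_atTop.mp this
    refine ⟨max n N, ?_⟩
    intro k hk l hl x _
    obtain ⟨m, hm, hmeq⟩ := hrep k n (le_trans (le_max_left _ _) hk)
    obtain ⟨m', hm', hmeq'⟩ := hrep l n (le_trans (le_max_left _ _) hl)
    have h1 : dist (G k x) (F n (x + h (d k))) < ε/3 := hn _
    have h2 : dist (G l x) (F n (x + h (d l))) < ε/3 := hn _
    have h3 : dist (F n (x + h (d k))) (F n (x + h (d l))) < ε/3 := by
      rw [hmeq, hmeq']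
      have a1 := hN m (le_trans (le_trans (le_max_right _ _) hk) hm) x
      have a2 := hN m' (le_trans (le_trans (le_max_right _ _) hl) hm') x
      calc dist (F n (x + h (s n m))) (F n (x + h (s n m')))
          ≤ dist (F n (x + h (s n m))) (gn x) + dist (gn x) (F n (x + h (s n m'))) :=
            dist_triangle _ _ _
        _ < ε/6 + ε/6 := by rw [dist_comm] at a1; exact add_lt_add a1 a2
        _ ≤ ε/3 := by linarith
    calc dist (G k x) (G l x)
        ≤ dist (G k x) (F n (x + h (d k))) + dist (F n (x + h (d k))) (F n (x + h (d l)))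
          + dist (F n (x + h (d l))) (G l x) := dist_triangle4 _ _ _ _
      _ < ε/3 + ε/3 + ε/3 := by rw [dist_comm] at h2; exact add_lt_add (add_lt_add h1 h3) h2
      _ = ε := by ring
  have hptc : ∀ x : ℝ, ∃ l : ℂ, Tendsto (fun k => G k x) atTop (𝓝 l) := by
    intro x
    apply cauchySeq_tendsto_of_complete
    rw [Metric.cauchySeq_iff]
    intro ε hε
    obtain ⟨N, hN⟩ := Metric.uniformCauchySeqOn_iff.mp hcauchy ε hε
    exact ⟨N, fun m hm l hl => hN m hm l hl x (Set.mem_univ x)⟩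
  choose g0 hg0 using hptc
  exact ⟨g0, tendstoUniformlyOn_univ.mp
    (hcauchy.tendstoUniformlyOn_of_tendsto fun x _ => hg0 x)⟩

lemma ap_diffquot (f : ℝ → ℂ) (hf : AlmostPeriodic f) (δ : ℝ) (hδ : δ ≠ 0) :
    AlmostPeriodic (fun x => ((δ : ℂ))⁻¹ * (f (x + δ) - f x)) := by
  obtain ⟨hc, hap⟩ := hf
  constructor
  · exact continuous_const.mul ((hc.comp (continuous_id.add continuous_const)).sub hc)
  intro h
  obtain ⟨φ, hφ, g, hg⟩ := hap h
  refine ⟨φ, hφ, fun x => ((δ : ℂ))⁻¹ * (g (x + δ) - g x), ?_⟩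
  rw [Metric.tendstoUniformly_iff] at hg ⊢
  intro ε hε
  have hδ' : (0:ℝ) < ‖((δ:ℂ))⁻¹‖ + 1 := by positivity
  filter_upwards [hg (ε / (2 * (‖((δ:ℂ))⁻¹‖ + 1))) (by positivity)] with k hk x
  have h1 := hk (x + δ)
  have h2 := hk x
  have e1 : x + δ + h (φ k) = x + h (φ k) + δ := by ring
  rw [dist_eq_norm] at h1 h2 ⊢
  calc ‖((δ:ℂ))⁻¹ * (g (x + δ) - g x) -
        ((δ:ℂ))⁻¹ * (f (x + h (φ k) + δ) - f (x + h (φ k)))‖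
      = ‖((δ:ℂ))⁻¹‖ * ‖(g (x + δ) - f (x + δ + h (φ k))) - (g x - f (x + h (φ k)))‖ := by
        rw [← norm_mul, ← mul_sub, e1]; ring_nf
    _ ≤ ‖((δ:ℂ))⁻¹‖ * (‖g (x + δ) - f (x + δ + h (φ k))‖ + ‖g x - f (x + h (φ k))‖) := by
        gcongr; exact norm_sub_le _ _
    _ ≤ (‖((δ:ℂ))⁻¹‖ + 1) * (‖g (x + δ) - f (x + δ + h (φ k))‖ + ‖g x - f (x + h (φ k))‖) := by
        apply mul_le_mul_of_nonneg_right (by linarith) (by positivity)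
    _ < (‖((δ:ℂ))⁻¹‖ + 1) * (ε / (2 * (‖((δ:ℂ))⁻¹‖ + 1)) + ε / (2 * (‖((δ:ℂ))⁻¹‖ + 1))) := by
        have := add_lt_add h1 h2
        apply mul_lt_mul_of_pos_left this hδ'
    _ = ε := by field_simp; ring

lemma taylor_bound (f : ℝ → ℂ) (hf : ContDiff ℝ (⊤ : ℕ∞) f) (M : ℝ)
    (hM : ∀ x, ‖deriv (deriv f) x‖ ≤ M) (x δ : ℝ) (hδ : 0 < δ) :
    ‖f (x + δ) - f x - δ • deriv f x‖ ≤ M * δ * δ := by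
  have hd1 : Differentiable ℝ f := (hf.differentiable (by simp))
  have hd2 : Differentiable ℝ (deriv f) := ((hf.iterate_deriv 1).differentiable (by simp))
  have hlip : ∀ a b : ℝ, ‖deriv f b - deriv f a‖ ≤ M * ‖b - a‖ := by
    intro a b
    exact Convex.norm_image_sub_le_of_norm_deriv_le (fun y _ => hd2 y)
      (fun y _ => hM y) convex_univ trivial trivial
  set c := deriv f x with hc
  set g : ℝ → ℂ := fun t => f t - t • c with hgdef
  have hg : ∀ t ∈ Set.Icc x (x + δ), HasDerivWithinAt g (deriv f t - c) (Set.Icc x (x + δ)) t := by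
    intro t _
    exact (((hd1 t).hasDerivAt).sub ((hasDerivAt_id t).smul_const c)).hasDerivWithinAt.congr_deriv
      (by simp)
  have bound : ∀ t ∈ Set.Ico x (x + δ), ‖deriv f t - c‖ ≤ M * δ := by
    intro t ht
    calc ‖deriv f t - c‖ ≤ M * ‖t - x‖ := hlip x t
      _ ≤ M * δ := by
          have h0 : (0:ℝ) ≤ M := le_trans (norm_nonneg _) (hM x)
          have : ‖t - x‖ ≤ δ := by
            rw [Real.norm_eq_abs, abs_of_nonneg (by linarith [ht.1])]
            linarith [ht.2]
          exact mul_le_mul_of_nonneg_left this h0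
  have key := norm_image_sub_le_of_norm_deriv_le_segment' hg bound (x + δ)
    (Set.right_mem_Icc.mpr (by linarith))
  have e : g (x + δ) - g x = f (x + δ) - f x - δ • c := by
    simp only [hgdef]
    push_cast
    module
  rw [e] at key
  calc ‖f (x + δ) - f x - δ • c‖ ≤ M * δ * (x + δ - x) := key
    _ = M * δ * δ := by ring

lemma ap_deriv (f : ℝ → ℂ) (hf : ContDiff ℝ (⊤ : ℕ∞) f) (hap : AlmostPeriodic f) (M : ℝ)
    (hM : ∀ x, ‖deriv (deriv f) x‖ ≤ M) : AlmostPeriodic (deriv f) := by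
  set δ : ℕ → ℝ := fun n => 1 / (n + 1) with hδdef
  have hδpos : ∀ n, 0 < δ n := fun n => by positivity
  set Q : ℕ → ℝ → ℂ := fun n x => ((δ n : ℂ))⁻¹ * (f (x + δ n) - f x) with hQ
  have hQap : ∀ n, AlmostPeriodic (Q n) := fun n => ap_diffquot f hap (δ n) (hδpos n).ne'
  apply ap_closure Q (deriv f) hQap
  rw [Metric.tendstoUniformly_iff]
  intro ε hε
  have hM0 : (0:ℝ) ≤ M := le_trans (norm_nonneg _) (hM 0)
  have htend : Tendsto (fun n : ℕ => M * δ n) atTop (𝓝 0) := by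
    have : Tendsto δ atTop (𝓝 0) := tendsto_one_div_add_atTop_nhds_zero_nat
    simpa [hδdef, one_div] using this.const_mul M
  filter_upwards [htend.eventually_lt_const hε] with n hn x
  rw [dist_eq_norm]
  have key := taylor_bound f hf M hM x (δ n) (hδpos n)
  have e : deriv f x - Q n x = ((δ n : ℂ))⁻¹ * (((δ n) • deriv f x) - (f (x + δ n) - f x)) := by
    rw [mul_sub]
    congr 1
    · rw [Complex.real_smul, ← mul_assoc, inv_mul_cancel₀ (by exact_mod_cast (hδpos n).ne'),
        one_mul]
  calc ‖deriv f x - Q n x‖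
      = ‖((δ n : ℂ))⁻¹‖ * ‖f (x + δ n) - f x - (δ n) • deriv f x‖ := by
        rw [e, norm_mul, ← norm_neg (((δ n) • deriv f x) - (f (x + δ n) - f x))]
        congr 2
        ring_nf
    _ ≤ ‖((δ n : ℂ))⁻¹‖ * (M * δ n * δ n) := by gcongr
    _ = M * δ n := by
        rw [norm_inv, Complex.norm_real, Real.norm_eq_abs, abs_of_pos (hδpos n)]
        field_simp
    _ < ε := hn

lemma ap_base (v : ℝ → ℂ) (hv : ContDiff ℝ (⊤ : ℕ∞) v)
    (hC : ∃ C : ℝ, ∀ x, ‖deriv v x‖ ≤ C)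
    (hconv : ∀ φ : ℝ → ℂ, ContDiff ℝ (⊤ : ℕ∞) φ → HasCompactSupport φ →
      AlmostPeriodic (fun x => ∫ y : ℝ, v (x - y) * φ y)) :
    AlmostPeriodic v := by
  obtain ⟨C₀, hC₀⟩ := hC
  set L : ℝ := max C₀ 0 with hLdef
  have hL0 : 0 ≤ L := le_max_right _ _
  have hlip : ∀ a b : ℝ, ‖v b - v a‖ ≤ L * ‖b - a‖ := fun a b =>
    Convex.norm_image_sub_le_of_norm_deriv_le
      (fun y _ => (hv.differentiable (by simp)) y)
      (fun y _ => le_trans (hC₀ y) (le_max_left _ _)) convex_univ trivial trivial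
  set r : ℕ → ℝ := fun n => 1 / (n + 1) with hrdef
  have hrpos : ∀ n, 0 < r n := fun n => by positivity
  set bump : (n : ℕ) → ContDiffBump (0 : ℝ) := fun n =>
    ⟨r n / 2, r n, by positivity, by linarith [hrpos n]⟩ with hbump
  set Φ : ℕ → ℝ → ℂ := fun n y => ((bump n).normed volume y : ℂ) with hΦ
  have hΦsmooth : ∀ n, ContDiff ℝ (⊤ : ℕ∞) (Φ n) := fun n =>
    Complex.ofRealCLM.contDiff.comp (bump n).contDiff_normed
  have hΦsupp : ∀ n, HasCompactSupport (Φ n) := fun n =>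
    ((bump n).hasCompactSupport_normed).comp_left (g := fun t : ℝ => (t : ℂ)) rfl
  set F : ℕ → ℝ → ℂ := fun n x => ∫ y : ℝ, v (x - y) * Φ n y with hF
  have hFap : ∀ n, AlmostPeriodic (F n) := fun n => hconv (Φ n) (hΦsmooth n) (hΦsupp n)
  apply ap_closure F v hFap
  rw [Metric.tendstoUniformly_iff]
  intro ε hε
  have htend : Tendsto (fun n : ℕ => L * r n) atTop (𝓝 0) := by
    have : Tendsto r atTop (𝓝 0) := tendsto_one_div_add_atTop_nhds_zero_nat
    simpa [hrdef, one_div] using this.const_mul L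
  filter_upwards [htend.eventually_lt_const hε] with n hn x
  rw [dist_eq_norm]
  have hnint : Integrable ((bump n).normed volume) volume := (bump n).integrable_normed
  have hΦint : Integrable (Φ n) volume := hnint.ofReal
  have hint1 : Integrable (fun y => v (x - y) * Φ n y) volume := by
    apply Continuous.integrable_of_hasCompactSupport
    · exact (hv.continuous.comp (continuous_const.sub continuous_id)).mul (hΦsmooth n).continuous
    · exact (hΦsupp n).mul_left
  have hΦtot : ∫ y : ℝ, Φ n y = 1 := by
    have h := ContinuousLinearMap.integral_comp_comm Complex.ofRealCLM hnint
    simpa [(bump n).integral_normed] using h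
  have e : v x - F n x = -∫ y : ℝ, (v (x - y) - v x) * Φ n y := by
    have h2 : ∫ y : ℝ, (v (x - y) - v x) * Φ n y
        = (∫ y : ℝ, v (x - y) * Φ n y) - ∫ y : ℝ, v x * Φ n y := by
      rw [← integral_sub hint1 (hΦint.const_mul (v x))]
      congr 1; ext y; ring
    rw [h2, integral_const_mul, hΦtot, mul_one]
    ring
  rw [e, norm_neg]
  have hptw : ∀ y : ℝ, ‖(v (x - y) - v x) * Φ n y‖ ≤ L * r n * (bump n).normed volume y := by
    intro y
    by_cases hy : (bump n).normed volume y = 0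
    · simp [hΦ, hy]
    · have hy' : y ∈ Metric.ball (0:ℝ) (r n) := by
        have := Function.mem_support.mpr hy
        rwa [(bump n).support_normed_eq] at this
      have hyn : ‖y‖ ≤ r n := le_of_lt (mem_ball_zero_iff.mp hy')
      have heq : ‖(v (x - y) - v x) * Φ n y‖ = ‖v (x - y) - v x‖ * (bump n).normed volume y := by
        rw [norm_mul, hΦ, Complex.norm_real, Real.norm_eq_abs,
          abs_of_nonneg ((bump n).nonneg_normed y)]
      rw [heq]
      apply mul_le_mul_of_nonneg_right _ ((bump n).nonneg_normed y)
      calc ‖v (x - y) - v x‖ ≤ L * ‖(x - y) - x‖ := hlip x (x - y)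
        _ = L * ‖y‖ := by rw [sub_sub_cancel_left, norm_neg]
        _ ≤ L * r n := mul_le_mul_of_nonneg_left hyn hL0
  calc ‖∫ y : ℝ, (v (x - y) - v x) * Φ n y‖
      ≤ ∫ y : ℝ, L * r n * (bump n).normed volume y :=
        norm_integral_le_of_norm_le (hnint.const_mul _) (Eventually.of_forall hptw)
    _ = L * r n := by rw [integral_const_mul, (bump n).integral_normed, mul_one]
    _ < ε := hn

/-- if `v ∈ 𝓓_{L^∞}` and `v * φ ∈ C_ap` for all test functions `φ`,
then `v ∈ 𝓑_ap`. -/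

theorem bap_of_conv_ap (v : ℝ → ℂ) (hv : ContDiff ℝ (⊤ : ℕ∞) v)
    (hbd : ∀ j : ℕ, ∃ C : ℝ, ∀ x : ℝ, ‖iteratedDeriv j v x‖ ≤ C)
    (hconv : ∀ φ : ℝ → ℂ, ContDiff ℝ (⊤ : ℕ∞) φ → HasCompactSupport φ →
      AlmostPeriodic (fun x => ∫ y : ℝ, v (x - y) * φ y)) :
    BAp v := by
  refine ⟨hv, ?_⟩
  intro j
  induction j with
  | zero =>
    rw [iteratedDeriv_zero]
    apply ap_base v hv ?_ hconv
    obtain ⟨C, hC⟩ := hbd 1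
    exact ⟨C, fun x => by rw [← iteratedDeriv_one]; exact hC x⟩
  | succ j ih =>
    rw [iteratedDeriv_succ]
    obtain ⟨M, hM⟩ := hbd (j + 2)
    apply ap_deriv (iteratedDeriv j v) ?_ ih (max M 0) ?_
    · rw [iteratedDeriv_eq_iterate]
      exact hv.iterate_deriv j
    · intro x
      have e : deriv (deriv (iteratedDeriv j v)) x = iteratedDeriv (j + 2) v x := by
        rw [show j + 2 = (j + 1) + 1 from rfl, iteratedDeriv_succ, iteratedDeriv_succ]
      rw [e]
      exact le_trans (hM x) (le_max_left _ _)
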